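/- If a finite group G has subgroups K and H with K normal in H ≤ G such that the quotient group H/K is isomorphic to the dihedral group of order 2pq for two distinct primes p and q, then G contains an element g whose order is not a prime power and which is conjugate in G to its inverse g⁻¹. -/

import Mathlib

section ConjInvProof


section Parity

variable {Y : Type*} [Finite Y]

private def zmodSmul (f : Y → Y) (a : ℕ) (k : Multiplicative (ZMod (2^a))) (y : Y) : Y :=
  f^[(Multiplicative.toAdd k).val] y

private def zmodAction (f : Y → Y) (a : ℕ) (hid : f^[2^a] = id) :
    MulAction (Multiplicative (ZMod (2^a))) Y where
  smul := zmodSmul f a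
  one_smul y := by
    haveI : NeZero (2^a) := ⟨pow_ne_zero _ two_ne_zero⟩
    show f^[(Multiplicative.toAdd (1 : Multiplicative (ZMod (2^a)))).val] y = y
    rw [toAdd_one, ZMod.val_zero]
    rfl
  mul_smul j k y := by
    haveI : NeZero (2^a) := ⟨pow_ne_zero _ two_ne_zero⟩
    show f^[(Multiplicative.toAdd (j * k)).val] y
        = f^[(Multiplicative.toAdd j).val] (f^[(Multiplicative.toAdd k).val] y)
    have hmod : ∀ m : ℕ, f^[m % 2^a] = f^[m] := by
      intro m
      conv_rhs => rw [← Nat.div_add_mod m (2^a)]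
      rw [Function.iterate_add, Function.iterate_mul, hid]
      simp
    rw [toAdd_mul, ZMod.val_add, hmod, Function.iterate_add_apply]

/-- Parity of the fixed point set of `f` with `f^[2^a] = id`. -/
private theorem card_fix_modEq (f : Y → Y) (a : ℕ) (hid : f^[2^a] = id) :
    Nat.card Y ≡ Nat.card {y : Y // f y = y} [MOD 2] := by
  rcases Nat.eq_zero_or_pos a with rfl | ha
  · have : ∀ y : Y, f y = y := by
      intro y; have := congrFun hid y; simpa using this
    exact (Nat.card_congr (Equiv.subtypeUnivEquiv this)).symm ▸ Nat.ModEq.refl _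
  haveI : NeZero (2^a) := ⟨pow_ne_zero _ two_ne_zero⟩
  letI := zmodAction f a hid
  haveI : Fact (Nat.Prime 2) := ⟨Nat.prime_two⟩
  have hPG : IsPGroup 2 (Multiplicative (ZMod (2^a))) := by
    apply IsPGroup.of_card (n := a)
    simpa using Nat.card_zmod (2^a)
  have hme := hPG.card_modEq_card_fixedPoints Y
  have hfix : ∀ y : Y, (y ∈ MulAction.fixedPoints (Multiplicative (ZMod (2^a))) Y) ↔ f y = y := by
    intro y
    constructor
    · intro h
      have h1 := h (Multiplicative.ofAdd (1 : ZMod (2^a)))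
      have : f^[(1 : ZMod (2^a)).val] y = y := h1
      rwa [ZMod.val_one_eq_one_mod, Nat.mod_eq_of_lt (by
        exact Nat.one_lt_two_pow (by omega)), Function.iterate_one] at this
    · intro h g
      show f^[(Multiplicative.toAdd g).val] y = y
      exact Function.iterate_fixed h _
  have : Nat.card (MulAction.fixedPoints (Multiplicative (ZMod (2^a))) Y)
      = Nat.card {y : Y // f y = y} :=
    Nat.card_congr (Equiv.subtypeEquivRight hfix)
  rw [← this]
  exact hme


theorem exists_fix_of_odd (f : Y → Y) (a : ℕ) (hid : f^[2^a] = id)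
    (hodd : ¬ 2 ∣ Nat.card Y) : ∃ y, f y = y := by
  have h := card_fix_modEq f a hid
  have hfd : ¬ 2 ∣ Nat.card {y : Y // f y = y} := by
    intro h2
    exact hodd ((Nat.modEq_zero_iff_dvd).mp (h.trans (Nat.modEq_zero_iff_dvd.mpr h2)))
  have : Nat.card {y : Y // f y = y} ≠ 0 := by rintro h0; rw [h0] at hfd; exact hfd ⟨0, rfl⟩
  obtain ⟨y⟩ := Nat.card_ne_zero.mp this |>.1
  exact ⟨y.1, y.2⟩

theorem exists_fix_ne_of_even (f : Y → Y) (a : ℕ) (hid : f^[2^a] = id)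
    (heven : 2 ∣ Nat.card Y) (y₀ : Y) (h₀ : f y₀ = y₀) : ∃ y, f y = y ∧ y ≠ y₀ := by
  have h := card_fix_modEq f a hid
  have hfd : 2 ∣ Nat.card {y : Y // f y = y} :=
    (Nat.modEq_zero_iff_dvd).mp ((h.symm.trans (Nat.modEq_zero_iff_dvd.mpr heven)))
  haveI : Finite {y : Y // f y = y} := Subtype.finite
  have h1 : 1 < Nat.card {y : Y // f y = y} := by
    have hpos : 0 < Nat.card {y : Y // f y = y} :=
      Nat.card_pos_iff.mpr ⟨⟨⟨y₀, h₀⟩⟩, inferInstance⟩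
    omega
  haveI := Finite.one_lt_card_iff_nontrivial.mp h1
  obtain ⟨y, hy⟩ := exists_ne (⟨y₀, h₀⟩ : {y : Y // f y = y})
  exact ⟨y.1, y.2, fun h => hy (Subtype.ext h)⟩

end Parity


section Grp
variable {X : Type*} [Group X] [Finite X]

theorem exists_inverted {M : Type*} [Group M] (ψ : X →* M)
    (Θ : Subgroup X) (hN : Θ.Normal) {ℓ : ℕ} (hℓ : ℓ.Prime) (hP : IsPGroup ℓ Θ) (hl2 : ℓ ≠ 2)
    (t : X) (a : ℕ) (ha : 1 ≤ a) (ht : t ^ 2 ^ a = 1)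
    (c : M) (hc : c ∈ Subgroup.map ψ Θ) (hinv : ψ t * c * (ψ t)⁻¹ = c⁻¹) :
    ∃ x, x ∈ Θ ∧ ψ x = c ∧ t * x * t⁻¹ = x⁻¹ := by
  obtain ⟨θ₀, hθ₀Θ, hθ₀ψ⟩ := hc
  haveI : Fact ℓ.Prime := ⟨hℓ⟩
  set Y := {y : X // y ∈ Θ ∧ ψ y = c} with hY
  haveI : Finite Y := Subtype.finite
  have hmemf : ∀ y : Y, t * (y : X)⁻¹ * t⁻¹ ∈ Θ ∧ ψ (t * (y : X)⁻¹ * t⁻¹) = c := by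
    rintro ⟨y, hyΘ, hyψ⟩
    refine ⟨hN.conj_mem _ (Θ.inv_mem hyΘ) t, ?_⟩
    simp only [map_mul, map_inv, hyψ]
    rw [show ψ t * c⁻¹ * (ψ t)⁻¹ = (ψ t * c * (ψ t)⁻¹)⁻¹ by group, hinv, inv_inv]
  let f : Y → Y := fun y => ⟨t * (y : X)⁻¹ * t⁻¹, hmemf y⟩
  have hconj : ∀ (k : ℕ) (y : Y), ((f ∘ f)^[k] y : X) = (t^2)^k * (y : X) * ((t^2)^k)⁻¹ := by
    intro k
    induction k with
    | zero => intro y; simp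
    | succ k ih =>
      intro y
      rw [Function.iterate_succ_apply]
      have hval : ((f ∘ f) y : X) = t^2 * (y : X) * (t^2)⁻¹ := by
        show (t * (t * (y:X)⁻¹ * t⁻¹)⁻¹ * t⁻¹) = _
        rw [pow_two]
        group
      have := ih ((f ∘ f) y)
      rw [this, hval]
      rw [pow_succ]
      group
  have hid : f^[2^a] = id := by
    funext y
    have h2 : 2^a = 2 * 2^(a-1) := by
      rw [← pow_succ']
      congr 1
      omega
    apply Subtype.ext
    rw [h2, Function.iterate_mul]
    have h2f : f^[2] = f ∘ f := by
      funext z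
      rfl
    rw [h2f, hconj]
    rw [← pow_mul, ← h2, ht]
    simp
  have hodd : ¬ 2 ∣ Nat.card Y := by
    -- Y is in bijection with Θ ⊓ ker ψ
    have e : Y ≃ (Θ ⊓ ψ.ker : Subgroup X) := by
      refine ⟨fun y => ⟨θ₀⁻¹ * (y : X), Subgroup.mem_inf.mpr ⟨Θ.mul_mem (Θ.inv_mem hθ₀Θ) y.2.1, ?_⟩⟩,
        fun s => ⟨θ₀ * (s : X), Θ.mul_mem hθ₀Θ (Subgroup.mem_inf.mp s.2).1, ?_⟩, ?_, ?_⟩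
      · rw [MonoidHom.mem_ker, map_mul, map_inv, hθ₀ψ, y.2.2, inv_mul_cancel]
      · have := (Subgroup.mem_inf.mp s.2).2
        rw [map_mul, hθ₀ψ, MonoidHom.mem_ker.mp this, mul_one]
      · intro y; apply Subtype.ext; simp
      · intro s; apply Subtype.ext; simp
    rw [Nat.card_congr e]
    obtain ⟨k, hk⟩ := (IsPGroup.iff_card (p := ℓ)).mp (hP.to_inf_left (K := ψ.ker))
    rw [hk]
    intro hdvd
    have h2ℓ : (2:ℕ) ∣ ℓ := Nat.Prime.dvd_of_dvd_pow Nat.prime_two hdvd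
    exact hl2 ((Nat.prime_dvd_prime_iff_eq Nat.prime_two hℓ).mp h2ℓ).symm
  haveI : Nonempty Y := ⟨⟨θ₀, hθ₀Θ, hθ₀ψ⟩⟩
  obtain ⟨y, hy⟩ := exists_fix_of_odd f a hid hodd
  refine ⟨(y : X), y.2.1, y.2.2, ?_⟩
  have : t * (y:X)⁻¹ * t⁻¹ = (y : X) := congrArg Subtype.val hy
  calc t * (y:X) * t⁻¹ = (t * (y:X)⁻¹ * t⁻¹)⁻¹ := by group
  _ = (y:X)⁻¹ := by rw [this]



/-- In a nontrivial normal 2-subgroup, some nontrivial element is fixed by conjugation by a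
2-element `t`. -/
theorem exists_fixed_two (Θ : Subgroup X) (hN : Θ.Normal) (hP : IsPGroup 2 Θ) (hbot : Θ ≠ ⊥)
    (t : X) (a : ℕ) (ht : t ^ 2 ^ a = 1) :
    ∃ z, z ∈ Θ ∧ z ≠ 1 ∧ t * z * t⁻¹ = z := by
  let f : Θ → Θ := fun y => ⟨t * (y : X) * t⁻¹, hN.conj_mem _ y.2 t⟩
  have hval : ∀ (k : ℕ) (y : Θ), (f^[k] y : X) = t^k * (y : X) * (t^k)⁻¹ := by
    intro k
    induction k with
    | zero => intro y; simp
    | succ k ih =>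
      intro y
      rw [Function.iterate_succ_apply']
      show t * ((f^[k] y : Θ) : X) * t⁻¹ = _
      rw [ih, pow_succ']
      group
  have hid : f^[2^a] = id := by
    funext y
    apply Subtype.ext
    rw [hval, ht]
    simp
  have heven : 2 ∣ Nat.card Θ := by
    obtain ⟨k, hk⟩ := (IsPGroup.iff_card (p := 2)).mp hP
    rcases Nat.eq_zero_or_pos k with rfl | hkpos
    · exfalso
      apply hbot
      apply Subgroup.eq_bot_of_card_eq
      simpa using hk
    · rw [hk]; exact dvd_pow_self 2 hkpos.ne'
  have h₀ : f 1 = 1 := by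
    apply Subtype.ext
    show t * ((1 : Θ) : X) * t⁻¹ = ((1 : Θ) : X)
    simp
  obtain ⟨y, hy, hy1⟩ := exists_fix_ne_of_even f a hid heven 1 h₀
  refine ⟨(y : X), y.2, ?_, congrArg Subtype.val hy⟩
  intro h
  exact hy1 (Subtype.ext h)

/-- Extract an order-2 element fixed by `t` from a nontrivial normal 2-subgroup. -/
theorem exists_order_two_fixed (Θ : Subgroup X) (hN : Θ.Normal) (hP : IsPGroup 2 Θ)
    (hbot : Θ ≠ ⊥) (t : X) (a : ℕ) (ht : t ^ 2 ^ a = 1) :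
    ∃ z, z ∈ Θ ∧ orderOf z = 2 ∧ t * z * t⁻¹ = z⁻¹ := by
  obtain ⟨z, hzΘ, hz1, hzt⟩ := exists_fixed_two Θ hN hP hbot t a ht
  obtain ⟨k, hk⟩ := hP ⟨z, hzΘ⟩
  have hk' : z ^ 2 ^ k = 1 := by
    have := congrArg Subtype.val hk
    simpa using this
  have hord : orderOf z ∣ 2 ^ k := orderOf_dvd_of_pow_eq_one hk'
  obtain ⟨β, hβle, hβ⟩ := (Nat.dvd_prime_pow Nat.prime_two).mp hord
  have hβpos : 1 ≤ β := by
    rcases Nat.eq_zero_or_pos β with rfl | h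
    · exfalso; apply hz1; rw [← orderOf_eq_one_iff, hβ, pow_zero]
    · exact h
  refine ⟨z ^ 2 ^ (β - 1), Θ.pow_mem hzΘ _, ?_, ?_⟩
  · apply orderOf_eq_prime
    · rw [← pow_mul, ← pow_succ]
      have : β - 1 + 1 = β := by omega
      rw [this, ← hβ, pow_orderOf_eq_one]
    · intro h
      have : orderOf z ∣ 2 ^ (β - 1) := orderOf_dvd_of_pow_eq_one h
      rw [hβ] at this
      have hle := (Nat.pow_dvd_pow_iff_le_right (x := 2) (by norm_num)).mp this
      omega
  · have hconj : t * z ^ 2 ^ (β-1) * t⁻¹ = (t * z * t⁻¹) ^ 2 ^ (β-1) := by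
      rw [conj_pow]
    -- z^(2^(β-1)) is an involution, so equals its own inverse
    have hsq : (z ^ 2 ^ (β-1)) * (z ^ 2 ^ (β-1)) = 1 := by
      rw [← pow_add, ← two_mul, ← pow_succ']
      have : β - 1 + 1 = β := by omega
      rw [this, ← hβ, pow_orderOf_eq_one]
    rw [hconj, hzt]
    exact eq_inv_of_mul_eq_one_left hsq

end Grp


namespace DihedralGroup

variable {n : ℕ}

theorem r_pow' (i : ZMod n) (k : ℕ) : (r i) ^ k = r ((k : ZMod n) * i) := by
  induction k with
  | zero => rw [pow_zero, Nat.cast_zero, zero_mul, one_def]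
  | succ k ih =>
    rw [pow_succ, ih, r_mul_r]
    congr 1
    push_cast
    ring

theorem r_zpow' (i : ZMod n) (k : ℤ) : (r i) ^ k = r ((k : ZMod n) * i) := by
  cases k with
  | ofNat k => simpa using r_pow' i k
  | negSucc k =>
    rw [zpow_negSucc, r_pow']
    apply inv_eq_of_mul_eq_one_right
    rw [r_mul_r, one_def]
    congr 1
    push_cast
    ring

theorem sr_conj_r (j i : ZMod n) : sr j * r i * (sr j)⁻¹ = r (-i) := by
  have hinv : (sr j)⁻¹ = sr j := by
    apply inv_eq_of_mul_eq_one_right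
    rw [sr_mul_sr, one_def, sub_self]
  rw [hinv, sr_mul_r, sr_mul_sr]
  congr 1
  ring

theorem r_conj_r (j i : ZMod n) : r j * r i * (r j)⁻¹ = r i := by
  have hinv : (r j)⁻¹ = r (-j) := by
    apply inv_eq_of_mul_eq_one_right
    rw [r_mul_r, one_def]; congr 1; ring
  rw [hinv, r_mul_r, r_mul_r]
  congr 1
  ring

theorem sr_ne_one : (sr (0 : ZMod n)) ≠ 1 := by
  rw [one_def]
  exact fun h => by cases h

theorem orderOf_sr_zero : orderOf (sr (0 : ZMod n)) = 2 := by
  haveI : Fact (Nat.Prime 2) := ⟨Nat.prime_two⟩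
  apply orderOf_eq_prime
  · rw [pow_two, sr_mul_sr, one_def, sub_self]
  · exact sr_ne_one

theorem sr_zero_pow_odd (d : ℕ) (hd : ¬ 2 ∣ d) : (sr (0 : ZMod n)) ^ d = sr 0 := by
  obtain ⟨k, hk⟩ : ∃ k, d = 2 * k + 1 := ⟨d / 2, by omega⟩
  subst hk
  rw [pow_succ, pow_mul]
  have : (sr (0:ZMod n)) ^ 2 = 1 := by rw [pow_two, sr_mul_sr, one_def, sub_self]
  rw [this, one_pow, one_mul]

end DihedralGroup

open DihedralGroup in
/-- In a "terminal" group (no proper subgroup surjects onto the dihedral group), for each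
prime `ℓ` with `ℓ * e = n` there is a normal `ℓ`-subgroup whose image contains an element of
order `ℓ` in the rotation subgroup generated by `r e`. -/
theorem exists_normal_pgroup {X : Type*} [Group X] [Finite X] {n : ℕ}
    (ψ : X →* DihedralGroup n) (hsurj : Function.Surjective ψ)
    (hterm : ∀ Y : Subgroup X, Subgroup.map ψ Y = ⊤ → Y = ⊤)
    (ℓ e : ℕ) (hℓ : ℓ.Prime) (he : e ≠ 0) (hne : ℓ * e = n) :
    ∃ Θ : Subgroup X, Θ.Normal ∧ IsPGroup ℓ Θ ∧
      ∃ c : DihedralGroup n, c ∈ Subgroup.map ψ Θ ∧ orderOf c = ℓ ∧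
        c ∈ Subgroup.zpowers (DihedralGroup.r (e : ZMod n)) := by
  haveI : Fact ℓ.Prime := ⟨hℓ⟩
  have hn0 : n ≠ 0 := by rw [← hne]; exact Nat.mul_ne_zero hℓ.pos.ne' he
  haveI : NeZero n := ⟨hn0⟩
  set c₀ : DihedralGroup n := DihedralGroup.r (e : ZMod n) with hc₀
  have hc₀pow : c₀ ^ ℓ = 1 := by
    rw [hc₀, r_pow', one_def]
    congr 1
    rw [← Nat.cast_mul, hne, ZMod.natCast_self]
  have hc₀ne : c₀ ≠ 1 := by
    rw [hc₀, one_def]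
    intro h
    have he0 : (e : ZMod n) = 0 := by injection h
    rw [ZMod.natCast_eq_zero_iff] at he0
    have : n ≤ e := Nat.le_of_dvd (Nat.pos_of_ne_zero he) he0
    have : e < n := by
      calc e < ℓ * e := by nlinarith [hℓ.two_le, Nat.pos_of_ne_zero he]
      _ = n := hne
    omega
  have hc₀ord : orderOf c₀ = ℓ := orderOf_eq_prime hc₀pow hc₀ne
  set Cl : Subgroup (DihedralGroup n) := Subgroup.zpowers c₀ with hCl
  have hClnorm : Cl.Normal := by
    constructor
    intro x hx g
    obtain ⟨k, rfl⟩ := hx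
    have : g * c₀ ^ k * g⁻¹ = (g * c₀ * g⁻¹) ^ k := (conj_zpow).symm
    rw [this]
    have hgc : g * c₀ * g⁻¹ ∈ Cl := by
      cases g with
      | r j => rw [hc₀, r_conj_r]; exact Subgroup.mem_zpowers _
      | sr j =>
        rw [hc₀, sr_conj_r]
        have : DihedralGroup.r (-(e : ZMod n)) = c₀⁻¹ := by
          apply eq_inv_of_mul_eq_one_left
          rw [hc₀, r_mul_r, one_def]
          congr 1
          ring
        rw [this]
        exact Subgroup.inv_mem _ (Subgroup.mem_zpowers _)
    exact Subgroup.zpow_mem _ hgc k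
  set V : Subgroup X := Subgroup.comap ψ Cl with hV
  haveI : V.Normal := hClnorm.comap ψ
  obtain ⟨P⟩ : Nonempty (Sylow ℓ V) := inferInstance
  set Θ : Subgroup X := Subgroup.map V.subtype (P : Subgroup V) with hΘ
  have hΘP : IsPGroup ℓ Θ := P.2.map V.subtype
  have hΘV : Θ ≤ V := Subgroup.map_subtype_le _
  -- find an ℓ-element of V with nontrivial image
  obtain ⟨v, hv⟩ := hsurj c₀
  have hvV : v ∈ V := by
    rw [hV, Subgroup.mem_comap, hv]
    exact Subgroup.mem_zpowers _
  set m := orderOf v with hm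
  have hm0 : m ≠ 0 := (orderOf_pos v).ne'
  set d := ordCompl[ℓ] m with hd
  set w := v ^ d with hw
  have hψw : ψ w = c₀ ^ d := by rw [hw, map_pow, hv]
  have hdd : ¬ ℓ ∣ d := Nat.not_dvd_ordCompl hℓ hm0
  have hψwne : ψ w ≠ 1 := by
    rw [hψw]
    intro h
    exact hdd (hc₀ord ▸ orderOf_dvd_of_pow_eq_one h)
  have hwpow : w ^ ℓ ^ (m.factorization ℓ) = 1 := by
    rw [hw, ← pow_mul, mul_comm d, Nat.ordProj_mul_ordCompl_eq_self m ℓ, pow_orderOf_eq_one]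
  have hwV : w ∈ V := Subgroup.pow_mem _ hvV _
  set w1 : ↥V := ⟨w, hwV⟩ with hw1
  have hw1P : IsPGroup ℓ (Subgroup.zpowers w1) := by
    have hordw : orderOf w ∣ ℓ ^ (m.factorization ℓ) := orderOf_dvd_of_pow_eq_one hwpow
    obtain ⟨γ, _, hγ⟩ := (Nat.dvd_prime_pow hℓ).mp hordw
    apply IsPGroup.of_card (n := γ)
    rw [Nat.card_zpowers, ← hγ]
    exact (orderOf_injective V.subtype Subtype.coe_injective w1).symm
  obtain ⟨Q, hQ⟩ := hw1P.exists_le_sylow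
  obtain ⟨g, hg⟩ := MulAction.exists_smul_eq (↥V) Q P
  have hu : g * w1 * g⁻¹ ∈ (P : Subgroup V) := by
    rw [← hg, Sylow.coe_subgroup_smul]
    have : g * w1 * g⁻¹ = MulAut.conj g • w1 := rfl
    rw [this]
    exact Subgroup.smul_mem_pointwise_smul _ _ _ (hQ (Subgroup.mem_zpowers w1))
  set u : X := V.subtype (g * w1 * g⁻¹) with hu_def
  have huΘ : u ∈ Θ := ⟨_, hu, rfl⟩
  set c' := ψ u with hc'
  have hc'Θ : c' ∈ Subgroup.map ψ Θ := ⟨u, huΘ, rfl⟩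
  have hc'val : c' = ψ (g : X) * (c₀ ^ d) * (ψ (g : X))⁻¹ := by
    rw [hc', hu_def]
    simp only [Subgroup.coe_subtype, Subgroup.coe_mul, InvMemClass.coe_inv]
    rw [map_mul, map_mul, map_inv]
    rw [hψw]
  have hc'ne : c' ≠ 1 := by
    rw [hc'val]
    intro h
    apply hψwne
    rw [hψw]
    have := congrArg (fun z => (ψ (g:X))⁻¹ * z * ψ (g:X)) h
    simpa [mul_assoc] using this
  have hc'pow : c' ^ ℓ = 1 := by
    rw [hc'val, conj_pow, ← pow_mul, mul_comm d ℓ, pow_mul, hc₀pow, one_pow]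
    simp
  have hc'ord : orderOf c' = ℓ := orderOf_eq_prime hc'pow hc'ne
  have hc'Cl : c' ∈ Cl := by
    have : u ∈ V := hΘV huΘ
    rw [hV, Subgroup.mem_comap] at this
    exact this
  -- image of the normalizer is everything
  have hfr := Sylow.normalizer_sup_eq_top (p := ℓ) (N := V) P
  have hmapV : Subgroup.map ψ V ≤ Cl := Subgroup.map_comap_le _ _
  have hClmap : Cl ≤ Subgroup.map ψ Θ := by
    -- Cl = zpowers c', generated by any nontrivial element
    have hc'z : Subgroup.zpowers c' ≤ Cl := Subgroup.zpowers_le.mpr hc'Cl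
    have hcard : Nat.card (Subgroup.zpowers c') = Nat.card Cl := by
      rw [Nat.card_zpowers, hc'ord, hCl, Nat.card_zpowers, hc₀ord]
    have : Subgroup.zpowers c' = Cl := by
      have hfin : Finite Cl := by
        have : Finite (DihedralGroup n) := by
          haveI : NeZero n := ⟨hn0⟩
          infer_instance
        exact Subtype.finite
      -- use subgroupOf and eq_top_of_card_eq
      have hle := hc'z
      have h1 : ((Subgroup.zpowers c').subgroupOf Cl) = ⊤ := by
        apply Subgroup.eq_top_of_card_eq
        rw [Nat.card_congr (Subgroup.subgroupOfEquivOfLe hle).toEquiv]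
        exact hcard
      have := Subgroup.subgroupOf_eq_top.mp h1
      exact le_antisymm hc'z this
    rw [← this]
    exact Subgroup.zpowers_le.mpr hc'Θ
  have hnrm : Subgroup.map ψ (Subgroup.normalizer ((Subgroup.map V.subtype (P : Subgroup V)) : Set X)) = ⊤ := by
    have h1 : Subgroup.map ψ (Subgroup.normalizer ((Subgroup.map V.subtype (P : Subgroup V)) : Set X) ⊔ V) = ⊤ := by
      rw [hfr, ← MonoidHom.range_eq_map, MonoidHom.range_eq_top]
      exact hsurj
    rw [Subgroup.map_sup] at h1
    have h2 : Subgroup.map ψ V ≤ Subgroup.map ψ (Subgroup.normalizer ((Subgroup.map V.subtype (P : Subgroup V)) : Set X)) := by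
      calc Subgroup.map ψ V ≤ Cl := hmapV
      _ ≤ Subgroup.map ψ Θ := hClmap
      _ ≤ _ := Subgroup.map_mono (by rw [hΘ]; exact Subgroup.le_normalizer)
    rw [sup_eq_left.mpr h2] at h1
    exact h1
  have hΘnorm : Θ.Normal := by
    rw [hΘ, ← Subgroup.normalizer_eq_top_iff]
    exact hterm _ hnrm
  exact ⟨Θ, hΘnorm, hΘP, c', hc'Θ, hc'ord, hc'Cl⟩

open DihedralGroup in
/-- The key fact for each prime `ℓ ∈ {p,q}` in the "terminal" case: a normal `ℓ`-subgroup
contains an element inverted by the fixed 2-element `t`, of order divisible by `ℓ`. -/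
theorem getx {X : Type*} [Group X] [Finite X] {n : ℕ}
    (ψ : X →* DihedralGroup n) (hsurj : Function.Surjective ψ)
    (hterm : ∀ Y : Subgroup X, Subgroup.map ψ Y = ⊤ → Y = ⊤)
    (t : X) (a : ℕ) (ha : 1 ≤ a) (ht : t ^ 2 ^ a = 1) (hψt : ψ t = DihedralGroup.sr 0)
    (ℓ e : ℕ) (hℓ : ℓ.Prime) (he : e ≠ 0) (hne : ℓ * e = n) :
    ∃ Θ : Subgroup X, Θ.Normal ∧ IsPGroup ℓ Θ ∧
      ∃ x, x ∈ Θ ∧ ℓ ∣ orderOf x ∧ t * x * t⁻¹ = x⁻¹ := by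
  obtain ⟨Θ, hNorm, hPG, c, hcmem, hcord, hcz⟩ :=
    exists_normal_pgroup ψ hsurj hterm ℓ e hℓ he hne
  refine ⟨Θ, hNorm, hPG, ?_⟩
  by_cases hl2 : ℓ = 2
  · subst hl2
    have hbot : Θ ≠ ⊥ := by
      intro h
      rw [h] at hcmem
      have : c = 1 := by
        obtain ⟨y, hy, rfl⟩ := hcmem
        rw [Subgroup.mem_bot.mp hy, map_one]
      rw [this, orderOf_one] at hcord
      omega
    obtain ⟨z, hz1, hz2, hz3⟩ := exists_order_two_fixed Θ hNorm hPG hbot t a ht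
    exact ⟨z, hz1, by rw [hz2], hz3⟩
  · have hinv : ψ t * c * (ψ t)⁻¹ = c⁻¹ := by
      obtain ⟨k, rfl⟩ := hcz
      rw [hψt]
      calc DihedralGroup.sr 0 * (DihedralGroup.r (e : ZMod n)) ^ k * (DihedralGroup.sr 0)⁻¹
          = (DihedralGroup.sr 0 * DihedralGroup.r (e : ZMod n) * (DihedralGroup.sr 0)⁻¹) ^ k :=
            (conj_zpow).symm
      _ = (DihedralGroup.r (-(e : ZMod n))) ^ k := by rw [sr_conj_r]
      _ = ((DihedralGroup.r (e : ZMod n)) ^ k)⁻¹ := by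
            rw [← inv_zpow]
            have : (DihedralGroup.r (e : ZMod n))⁻¹ = DihedralGroup.r (-(e : ZMod n)) := by
              apply inv_eq_of_mul_eq_one_right
              rw [r_mul_r, one_def]
              congr 1
              ring
            rw [this]
    obtain ⟨x, hxΘ, hxψ, hxinv⟩ :=
      exists_inverted ψ Θ hNorm hℓ hPG hl2 t a ha ht c hcmem hinv
    refine ⟨x, hxΘ, ?_, hxinv⟩
    rw [← hcord, ← hxψ]
    exact orderOf_map_dvd ψ x

open DihedralGroup in
theorem terminal_case {X : Type*} [Group X] [Finite X] {p q : ℕ}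
    (hp : p.Prime) (hq : q.Prime) (hpq : p ≠ q)
    (ψ : X →* DihedralGroup (p * q)) (hsurj : Function.Surjective ψ)
    (hterm : ∀ Y : Subgroup X, Subgroup.map ψ Y = ⊤ → Y = ⊤) :
    ∃ g : X, p ∣ orderOf g ∧ q ∣ orderOf g ∧ IsConj g g⁻¹ := by
  -- build the 2-element t mapping to sr 0
  obtain ⟨t₀, ht₀⟩ := hsurj (DihedralGroup.sr 0)
  set m := orderOf t₀ with hm
  have hm0 : m ≠ 0 := (orderOf_pos t₀).ne'
  have h2m : 2 ∣ m := by
    have := orderOf_map_dvd ψ t₀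
    rw [ht₀, orderOf_sr_zero] at this
    exact this
  set a := m.factorization 2 with hafact
  have ha : 1 ≤ a := by
    rw [hafact]
    exact (Nat.Prime.factorization_pos_of_dvd Nat.prime_two hm0 h2m)
  set d := ordCompl[2] m with hddef
  set t := t₀ ^ d with htdef
  have hdodd : ¬ 2 ∣ d := Nat.not_dvd_ordCompl Nat.prime_two hm0
  have hψt : ψ t = DihedralGroup.sr 0 := by
    rw [htdef, map_pow, ht₀, sr_zero_pow_odd d hdodd]
  have ht : t ^ 2 ^ a = 1 := by
    rw [htdef, ← pow_mul, mul_comm d (2^a), Nat.ordProj_mul_ordCompl_eq_self m 2,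
      pow_orderOf_eq_one]
  -- the two normal subgroups
  obtain ⟨Θp, hΘpN, hΘpP, xp, hxpΘ, hxpdvd, hxpinv⟩ :=
    getx ψ hsurj hterm t a ha ht hψt p q hp hq.pos.ne' rfl
  obtain ⟨Θq, hΘqN, hΘqP, xq, hxqΘ, hxqdvd, hxqinv⟩ :=
    getx ψ hsurj hterm t a ha ht hψt q p hq hp.pos.ne' (mul_comm q p)
  -- intersection is trivial
  have hdisj : ∀ u : X, u ∈ Θp → u ∈ Θq → u = 1 := by
    intro u hup huq
    obtain ⟨i, hi⟩ := hΘpP ⟨u, hup⟩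
    obtain ⟨j, hj⟩ := hΘqP ⟨u, huq⟩
    have hi' : u ^ p ^ i = 1 := by simpa using congrArg Subtype.val hi
    have hj' : u ^ q ^ j = 1 := by simpa using congrArg Subtype.val hj
    have h1 : orderOf u ∣ p ^ i := orderOf_dvd_of_pow_eq_one hi'
    have h2 : orderOf u ∣ q ^ j := orderOf_dvd_of_pow_eq_one hj'
    have hco : Nat.Coprime (p ^ i) (q ^ j) :=
      Nat.Coprime.pow i j ((Nat.coprime_primes hp hq).mpr hpq)
    have hgcd : Nat.gcd (p ^ i) (q ^ j) = 1 := hco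
    have hdvd1 : orderOf u ∣ 1 := hgcd ▸ Nat.dvd_gcd h1 h2
    rw [← orderOf_eq_one_iff]
    exact Nat.dvd_one.mp hdvd1
  have hcomm : Commute xp xq := by
    have hmem : xp * xq * xp⁻¹ * xq⁻¹ ∈ Θq := by
      apply Subgroup.mul_mem
      · exact hΘqN.conj_mem _ hxqΘ _
      · exact Subgroup.inv_mem _ hxqΘ
    have hmem' : xp * xq * xp⁻¹ * xq⁻¹ ∈ Θp := by
      have : xp * (xq * xp⁻¹ * xq⁻¹) ∈ Θp := by
        apply Subgroup.mul_mem _ hxpΘ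
        have := hΘpN.conj_mem _ (Subgroup.inv_mem _ hxpΘ) xq
        exact this
      simpa [mul_assoc] using this
    have := hdisj _ hmem' hmem
    have h1 : xp * xq = xq * xp := by
      have := congrArg (fun z => z * xq * xp) this
      simpa [mul_assoc] using this
    exact h1
  set g := xp * xq with hg
  have hgconj : t * g * t⁻¹ = g⁻¹ := by
    rw [hg]
    have : t * (xp * xq) * t⁻¹ = (t * xp * t⁻¹) * (t * xq * t⁻¹) := by group
    rw [this, hxpinv, hxqinv, ← mul_inv_rev, ← hcomm.eq]
  have hpd : p ∣ orderOf g := by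
    have hgpow : g ^ orderOf g = 1 := pow_orderOf_eq_one g
    have : xp ^ orderOf g * xq ^ orderOf g = 1 := by
      rw [← hcomm.mul_pow, ← hg, hgpow]
    have hxpg : xp ^ orderOf g = (xq ^ orderOf g)⁻¹ := by
      rw [eq_inv_iff_mul_eq_one]
      exact this
    have hmem : xp ^ orderOf g ∈ Θq := by
      rw [hxpg]
      exact Subgroup.inv_mem _ (Subgroup.pow_mem _ hxqΘ _)
    have h1 : xp ^ orderOf g = 1 := hdisj _ (Subgroup.pow_mem _ hxpΘ _) hmem
    exact hxpdvd.trans (orderOf_dvd_of_pow_eq_one h1)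
  have hqd : q ∣ orderOf g := by
    have hgpow : g ^ orderOf g = 1 := pow_orderOf_eq_one g
    have : xp ^ orderOf g * xq ^ orderOf g = 1 := by
      rw [← hcomm.mul_pow, ← hg, hgpow]
    have hxqg : xq ^ orderOf g = (xp ^ orderOf g)⁻¹ := by
      rw [eq_inv_iff_mul_eq_one]
      rwa [(hcomm.pow_pow _ _).eq] at this
    have hmem : xq ^ orderOf g ∈ Θp := by
      rw [hxqg]
      exact Subgroup.inv_mem _ (Subgroup.pow_mem _ hxpΘ _)
    have h1 : xq ^ orderOf g = 1 := hdisj _ hmem (Subgroup.pow_mem _ hxqΘ _)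
    exact hxqdvd.trans (orderOf_dvd_of_pow_eq_one h1)
  exact ⟨g, hpd, hqd, isConj_iff.mpr ⟨t, hgconj⟩⟩

universe u

theorem dihedral_core {p q : ℕ} (hp : p.Prime) (hq : q.Prime) (hpq : p ≠ q) :
    ∀ (N : ℕ) (X : Type u) (_ : Group X) (_ : Finite X)
      (ψ : X →* DihedralGroup (p * q)), Function.Surjective ψ → Nat.card X ≤ N →
      ∃ g : X, p ∣ orderOf g ∧ q ∣ orderOf g ∧ IsConj g g⁻¹ := by
  intro N
  induction N with
  | zero =>
    intro X _ _ ψ hsurj hcard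
    exfalso
    have : 0 < Nat.card X := Nat.card_pos
    omega
  | succ N IH =>
    intro X _ _ ψ hsurj hcard
    by_cases hterm : ∀ Y : Subgroup X, Subgroup.map ψ Y = ⊤ → Y = ⊤
    · exact terminal_case hp hq hpq ψ hsurj hterm
    · push_neg at hterm
      obtain ⟨Y, hYmap, hYne⟩ := hterm
      have hsurj' : Function.Surjective (ψ.comp Y.subtype) := by
        rw [← MonoidHom.range_eq_top, MonoidHom.range_comp, Subgroup.range_subtype, hYmap]
      have hcard' : Nat.card Y ≤ N := by
        have hdvd : Nat.card Y ∣ Nat.card X := Subgroup.card_subgroup_dvd_card Y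
        have hpos : 0 < Nat.card X := Nat.card_pos
        have hle : Nat.card Y ≤ Nat.card X := Nat.le_of_dvd hpos hdvd
        have hne : Nat.card Y ≠ Nat.card X := fun h => hYne (Subgroup.eq_top_of_card_eq Y h)
        omega
      obtain ⟨g', hp', hq', hconj'⟩ :=
        IH ↥Y inferInstance inferInstance (ψ.comp Y.subtype) hsurj' hcard'
      have hord : orderOf (g' : X) = orderOf g' :=
        orderOf_injective Y.subtype Subtype.coe_injective g'
      refine ⟨(g' : X), ?_, ?_, ?_⟩
      · rw [hord]; exact hp'
      · rw [hord]; exact hq'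
      · obtain ⟨c, hc⟩ := isConj_iff.mp hconj'
        apply isConj_iff.mpr
        refine ⟨(c : X), ?_⟩
        have := congrArg (Y.subtype) hc
        simpa using this


end ConjInvProof

/-- If a finite group `G` has subgroups `K ⊴ H ≤ G` such that `H/K` is isomorphic to
the dihedral group of order `2pq` for two distinct primes `p` and `q` (expressed via a
surjective homomorphism `H →* DihedralGroup (p * q)` with kernel `K`), then `G` has an
element `g` of non-prime-power order (i.e. with at least two distinct primes dividing
its order) which is conjugate in `G` to its inverse `g⁻¹`. -/
theorem exists_conj_inv_of_dihedral_subquotient (G : Type*) [Group G] [Finite G]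
    (p q : ℕ) (hp : p.Prime) (hq : q.Prime) (hpq : p ≠ q)
    (H K : Subgroup G) (hKH : K ≤ H)
    (φ : H →* DihedralGroup (p * q)) (hsurj : Function.Surjective φ)
    (hker : MonoidHom.ker φ = K.subgroupOf H) :
    ∃ g : G, (∃ p' q' : ℕ, p'.Prime ∧ q'.Prime ∧ p' ≠ q' ∧
        p' ∣ orderOf g ∧ q' ∣ orderOf g) ∧
      IsConj g g⁻¹ := by
  obtain ⟨g', hp', hq', hconj'⟩ :=
    dihedral_core hp hq hpq (Nat.card ↥H) ↥H inferInstance inferInstance φ hsurj le_rfl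
  have hord : orderOf (g' : G) = orderOf g' :=
    orderOf_injective H.subtype Subtype.coe_injective g'
  refine ⟨(g' : G), ⟨p, q, hp, hq, hpq, by rw [hord]; exact hp', by rw [hord]; exact hq'⟩, ?_⟩
  obtain ⟨c, hc⟩ := isConj_iff.mp hconj'
  apply isConj_iff.mpr
  refine ⟨(c : G), ?_⟩
  have := congrArg (H.subtype) hc
  simpa using this
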